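/- The inclusion functor N : H → H⁺ from set-system hypergraphs with traditional homomorphisms into set-system hypergraphs with weak homomorphisms admits a right adjoint given by simplicial replacement: for every set-system hypergraph G and every weak homomorphism φ from N(H) to G, there is a unique traditional homomorphism φ̂ : H → N★(G) such that θ_G ∘ N(φ̂) = φ. -/

import Mathlib

/-- A set-system hypergraph: edge set, vertex set, and endpoint assignment. -/
structure SSHyp : Type 1 where
  E : Type
  V : Type
  eps : E → Set V

/-- A traditional set-system hypergraph homomorphism. -/
structure TradHom (G H : SSHyp) where
  fe : G.E → H.E
  fv : G.V → H.V
  comm : ∀ e, H.eps (fe e) = fv '' G.eps e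

/-- A weak set-system hypergraph homomorphism. -/
structure WeakHom (G H : SSHyp) where
  fe : G.E → H.E
  fv : G.V → H.V
  sub : ∀ e, fv '' G.eps e ⊆ H.eps (fe e)

/-- Every traditional homomorphism is a weak homomorphism (the inclusion `N : H → H⁺`). -/
def TradHom.toWeak {G H : SSHyp} (φ : TradHom G H) : WeakHom G H :=
  ⟨φ.fe, φ.fv, fun e => le_of_eq (φ.comm e).symm⟩

/-- Componentwise composition of weak homomorphisms. -/
def WeakHom.comp {G H K : SSHyp} (φ : WeakHom G H) (ψ : WeakHom H K) : WeakHom G K :=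
  ⟨ψ.fe ∘ φ.fe, ψ.fv ∘ φ.fv, fun e => by
    rw [Set.image_comp]
    exact Set.Subset.trans (Set.image_mono (φ.sub e)) (ψ.sub (φ.fe e))⟩

/-- Simplicial replacement N★(G): same vertices, edges `(e, A)` with `A ⊆ ε_G(e)`,
and `ε(e,A) = A`. -/
def Nstar (G : SSHyp) : SSHyp :=
  ⟨{p : G.E × Set G.V // p.2 ⊆ G.eps p.1}, G.V, fun p => p.val.2⟩

/-- The counit `θ_G : N(N★(G)) → G`: identity on vertices, `(e,A) ↦ e` on edges. -/
def theta (G : SSHyp) : WeakHom (Nstar G) G :=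
  ⟨fun p => p.val.1, id, fun p => by rintro _ ⟨x, hx, rfl⟩; exact p.property hx⟩

/-- Simplicial replacement is right adjoint to the inclusion `N : H → H⁺`: every weak
homomorphism `φ : N(H) → G` factors uniquely through `θ_G` by a traditional
homomorphism `φ̂ : H → N★(G)`. -/
theorem simplicial_replacement_right_adjoint (G H : SSHyp) (φ : WeakHom H G) :
    ∃! φh : TradHom H (Nstar G), φh.toWeak.comp (theta G) = φ := by
  refine ⟨⟨fun e => ⟨(φ.fe e, φ.fv '' H.eps e), φ.sub e⟩, φ.fv, fun e => rfl⟩, rfl, ?_⟩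
  rintro ⟨fe, fv, comm⟩ h
  have hfv : fv = φ.fv := congrArg WeakHom.fv h
  subst hfv
  have hfe : ∀ e, fe e = ⟨(φ.fe e, φ.fv '' H.eps e), φ.sub e⟩ := by
    intro e
    have h1 : (fe e).val.1 = φ.fe e := congrFun (congrArg WeakHom.fe h) e
    have h2 : (fe e).val.2 = φ.fv '' H.eps e := comm e
    exact Subtype.ext (Prod.ext h1 h2)
  congr 1
  exact funext hfe
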